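/- arXiv:2603.04686 — 2 statements merged into one kernel-verified Lean document; each statement's English description precedes it below -/
import Mathlib

section
/- Let I ≥ 0 and for δ ∈ (0,1), k > 0 define α_{δ,k}(t) = e^{−k|t|} for |t| ≤ 1−δ and α_{δ,k}(t) = δ^{-1} e^{−(1−δ)k}(1−|t|) for 1−δ < |t| ≤ 1. Then lim_{δ→0+} (∫_{-1}^1 α_{δ,k}) / (∫_{-1}^1 √(I α_{δ,k}² + (α_{δ,k}')²)) = 1 / (√(I + k²) + k/(e^k − 1)), and lim_{k→0+} of the right-hand side equals 1/(√I + 1). -/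
open MeasureTheory Set Filter
open scoped Interval

/-- The trapezoidal-exponential augmentation function `α_{δ,k}` of Example 2.3. -/
noncomputable def augFun (δ k t : ℝ) : ℝ :=
  if |t| ≤ 1 - δ then Real.exp (-k * |t|)
  else δ⁻¹ * Real.exp (-(1 - δ) * k) * (1 - |t|)

/-- Its almost-everywhere derivative. -/
noncomputable def augFun' (δ k t : ℝ) : ℝ :=
  if |t| ≤ 1 - δ then -k * Real.sign t * Real.exp (-k * |t|)
  else -Real.sign t * δ⁻¹ * Real.exp (-(1 - δ) * k)

lemma ae_ne_pt (c : ℝ) : ∀ᵐ x : ℝ, x ≠ c := by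
  have h : (volume : Measure ℝ) {c} = 0 := Real.volume_singleton
  simpa using measure_eq_zero_iff_ae_notMem.mp h

lemma II_of_ae {f g : ℝ → ℝ} {a b c : ℝ} (hf : Continuous f)
    (h : ∀ x, x ≠ c → x ∈ Ι a b → f x = g x) : IntervalIntegrable g volume a b := by
  have hf' : IntegrableOn f (Ι a b) volume := by
    rw [← intervalIntegrable_iff]; exact hf.intervalIntegrable a b
  rw [intervalIntegrable_iff]
  refine hf'.congr ?_
  refine (ae_restrict_iff' measurableSet_uIoc).mpr ?_
  filter_upwards [ae_ne_pt c] with x hx hmem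
  exact h x hx hmem

lemma integral_congr_pt {f g : ℝ → ℝ} {a b c : ℝ}
    (h : ∀ x, x ≠ c → x ∈ Ι a b → f x = g x) :
    ∫ t in a..b, g t = ∫ t in a..b, f t :=
  intervalIntegral.integral_congr_ae (by
    filter_upwards [ae_ne_pt c] with x hx hmem
    exact (h x hx hmem).symm)

lemma exp_antideriv (m a b : ℝ) (hm : m ≠ 0) :
    ∫ t in a..b, Real.exp (m * t) = (Real.exp (m * b) - Real.exp (m * a)) / m := by
  have h : ∀ t ∈ Set.uIcc a b, HasDerivAt (fun t => Real.exp (m * t) / m) (Real.exp (m * t)) t := by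
    intro t _
    have h1 : HasDerivAt (fun t : ℝ => m * t) m t := by
      simpa using (hasDerivAt_id t).const_mul m
    have h2 := (Real.hasDerivAt_exp (m * t)).comp t h1
    have h3 := h2.div_const m
    simpa [mul_comm, mul_div_assoc, hm] using h3
  rw [intervalIntegral.integral_eq_sub_of_hasDerivAt h
    ((Real.continuous_exp.comp (continuous_const.mul continuous_id)).intervalIntegrable a b)]
  ring

lemma numer_eq (k δ : ℝ) (hk : 0 < k) (hδ : 0 < δ) (hδ1 : δ < 1) :
    ∫ t in (-1:ℝ)..1, augFun δ k t
      = 2 * (1 - Real.exp (-(1-δ)*k)) / k + δ * Real.exp (-(1-δ)*k) := by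
  have hb : -(1-δ) ≤ (0:ℝ) := by linarith
  have ha : (-1:ℝ) ≤ -(1-δ) := by linarith
  have hc : (0:ℝ) ≤ 1-δ := by linarith
  have hd : (1-δ:ℝ) ≤ 1 := by linarith
  -- piece facts
  have E4 : ∀ x : ℝ, x ≠ 2 → x ∈ Ι (-1:ℝ) (-(1-δ)) →
      δ⁻¹ * Real.exp (-(1-δ)*k) * (1+x) = augFun δ k x := by
    intro x _ hx
    rw [uIoc_of_le ha] at hx
    have hx0 : x < 0 := lt_of_le_of_lt hx.2 (by linarith)
    unfold augFun
    rw [abs_of_neg hx0]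
    split_ifs with hcond
    · have hxe : x = -(1-δ) := le_antisymm hx.2 (by linarith)
      subst hxe
      rw [show -k * - -(1-δ) = -(1-δ)*k by ring, show (1:ℝ) + -(1-δ) = δ by ring]
      field_simp
    · ring_nf
  have E1 : ∀ x : ℝ, x ≠ 2 → x ∈ Ι (-(1-δ)) (0:ℝ) →
      Real.exp (k*x) = augFun δ k x := by
    intro x _ hx
    rw [uIoc_of_le hb] at hx
    have hx0 : x ≤ 0 := hx.2
    unfold augFun
    rw [abs_of_nonpos hx0, if_pos (by linarith [hx.1])]
    ring_nf
  have E2 : ∀ x : ℝ, x ≠ 2 → x ∈ Ι (0:ℝ) (1-δ) →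
      Real.exp (-k*x) = augFun δ k x := by
    intro x _ hx
    rw [uIoc_of_le hc] at hx
    have hx0 : 0 ≤ x := le_of_lt hx.1
    unfold augFun
    rw [abs_of_nonneg hx0, if_pos hx.2]
  have E3 : ∀ x : ℝ, x ≠ 2 → x ∈ Ι (1-δ:ℝ) 1 →
      δ⁻¹ * Real.exp (-(1-δ)*k) * (1-x) = augFun δ k x := by
    intro x _ hx
    rw [uIoc_of_le hd] at hx
    have hx0 : 0 < x := lt_of_le_of_lt (by linarith) hx.1
    unfold augFun
    rw [abs_of_pos hx0, if_neg (by linarith [hx.1])]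
  -- continuity of formulas
  have c4 : Continuous (fun x : ℝ => δ⁻¹ * Real.exp (-(1-δ)*k) * (1+x)) := by fun_prop
  have c1 : Continuous (fun x : ℝ => Real.exp (k*x)) := by fun_prop
  have c2 : Continuous (fun x : ℝ => Real.exp (-k*x)) := by fun_prop
  have c3 : Continuous (fun x : ℝ => δ⁻¹ * Real.exp (-(1-δ)*k) * (1-x)) := by fun_prop
  have I4 := II_of_ae c4 E4
  have I1 := II_of_ae c1 E1
  have I2 := II_of_ae c2 E2
  have I3 := II_of_ae c3 E3
  -- split
  rw [← intervalIntegral.integral_add_adjacent_intervals (b := (0:ℝ)) (I4.trans I1) (I2.trans I3),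
      ← intervalIntegral.integral_add_adjacent_intervals (b := (-(1-δ):ℝ)) I4 I1,
      ← intervalIntegral.integral_add_adjacent_intervals (b := (1-δ:ℝ)) I2 I3]
  rw [integral_congr_pt E4, integral_congr_pt E1, integral_congr_pt E2, integral_congr_pt E3]
  have i1 : ∫ t in (-(1-δ):ℝ)..0, Real.exp (k*t) = (1 - Real.exp (-(1-δ)*k))/k := by
    rw [exp_antideriv k _ _ hk.ne', show k * -(1-δ) = -(1-δ)*k by ring]
    simp
  have i2 : ∫ t in (0:ℝ)..(1-δ), Real.exp (-k*t) = (1 - Real.exp (-(1-δ)*k))/k := by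
    rw [show (fun t : ℝ => Real.exp (-k*t)) = (fun t : ℝ => Real.exp ((-k)*t)) by norm_num,
        exp_antideriv (-k) _ _ (by linarith), show -k * (1-δ) = -(1-δ)*k by ring]
    simp
    ring
  have i4 : ∫ t in (-1:ℝ)..(-(1-δ)), δ⁻¹ * Real.exp (-(1-δ)*k) * (1+t)
      = δ * Real.exp (-(1-δ)*k) / 2 := by
    rw [intervalIntegral.integral_const_mul]
    have : ∫ t in (-1:ℝ)..(-(1-δ)), (1+t) = δ^2/2 := by
      rw [show (fun t : ℝ => 1 + t) = (fun t : ℝ => (1:ℝ) + id t) from rfl,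
          intervalIntegral.integral_add intervalIntegrable_const (μ := volume)
            (continuous_id.intervalIntegrable _ _)]
      simp [integral_id]
      ring
    rw [this]; field_simp
  have i3 : ∫ t in (1-δ:ℝ)..1, δ⁻¹ * Real.exp (-(1-δ)*k) * (1-t)
      = δ * Real.exp (-(1-δ)*k) / 2 := by
    rw [intervalIntegral.integral_const_mul]
    have : ∫ t in (1-δ:ℝ)..1, (1-t) = δ^2/2 := by
      rw [show (fun t : ℝ => 1 - t) = (fun t : ℝ => (1:ℝ) - id t) from rfl,
          intervalIntegral.integral_sub intervalIntegrable_const (μ := volume)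
            (continuous_id.intervalIntegrable _ _)]
      simp [integral_id]
      ring
    rw [this]; field_simp
  rw [i1, i2, i3, i4]
  ring

lemma denom_eq (I k δ : ℝ) (hI : 0 ≤ I) (hk : 0 < k) (hδ : 0 < δ) (hδ1 : δ < 1) :
    ∫ t in (-1:ℝ)..1, Real.sqrt (I * (augFun δ k t)^2 + (augFun' δ k t)^2)
      = Real.sqrt (I + k^2) * (2 * (1 - Real.exp (-(1-δ)*k)) / k)
        + δ⁻¹ * Real.exp (-(1-δ)*k) *
          ((∫ t in (-1:ℝ)..(-(1-δ)), Real.sqrt (I*(1+t)^2+1))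
            + ∫ t in (1-δ:ℝ)..1, Real.sqrt (I*(1-t)^2+1)) := by
  have hb : -(1-δ) ≤ (0:ℝ) := by linarith
  have ha : (-1:ℝ) ≤ -(1-δ) := by linarith
  have hc : (0:ℝ) ≤ 1-δ := by linarith
  have hd : (1-δ:ℝ) ≤ 1 := by linarith
  have hepos : 0 < δ⁻¹ * Real.exp (-(1-δ)*k) := by positivity
  set s : ℝ → ℝ := fun t => Real.sqrt (I * (augFun δ k t)^2 + (augFun' δ k t)^2) with hs
  have E4 : ∀ x : ℝ, x ≠ -(1-δ) → x ∈ Ι (-1:ℝ) (-(1-δ)) →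
      δ⁻¹ * Real.exp (-(1-δ)*k) * Real.sqrt (I*(1+x)^2+1) = s x := by
    intro x hxc hx
    rw [uIoc_of_le ha] at hx
    have hx0 : x < 0 := lt_of_le_of_lt hx.2 (by linarith)
    have hxlt : x < -(1-δ) := lt_of_le_of_ne hx.2 hxc
    have hcond : ¬ |x| ≤ 1 - δ := by rw [abs_of_neg hx0]; linarith
    simp only [hs, augFun, augFun', if_neg hcond]
    rw [Real.sign_of_neg hx0, abs_of_neg hx0]
    rw [show I * (δ⁻¹ * Real.exp (-(1-δ)*k) * (1 - -x))^2
          + (-(-1 : ℝ) * δ⁻¹ * Real.exp (-(1-δ)*k))^2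
        = (δ⁻¹ * Real.exp (-(1-δ)*k))^2 * (I*(1+x)^2+1) by ring]
    rw [Real.sqrt_mul (sq_nonneg _), Real.sqrt_sq hepos.le]
  have E1 : ∀ x : ℝ, x ≠ 0 → x ∈ Ι (-(1-δ)) (0:ℝ) →
      Real.sqrt (I + k^2) * Real.exp (k*x) = s x := by
    intro x hxc hx
    rw [uIoc_of_le hb] at hx
    have hx0 : x < 0 := lt_of_le_of_ne hx.2 hxc
    have hcond : |x| ≤ 1 - δ := by rw [abs_of_neg hx0]; linarith [hx.1]
    simp only [hs, augFun, augFun', if_pos hcond]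
    rw [Real.sign_of_neg hx0, abs_of_neg hx0]
    rw [show I * (Real.exp (-k * -x))^2 + (-k * (-1 : ℝ) * Real.exp (-k * -x))^2
        = (I + k^2) * (Real.exp (-k * -x))^2 by ring]
    rw [Real.sqrt_mul (by positivity), Real.sqrt_sq (Real.exp_pos _).le,
        show -k * -x = k * x by ring]
  have E2 : ∀ x : ℝ, x ≠ 0 → x ∈ Ι (0:ℝ) (1-δ) →
      Real.sqrt (I + k^2) * Real.exp (-k*x) = s x := by
    intro x _ hx
    rw [uIoc_of_le hc] at hx
    have hx0 : 0 < x := hx.1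
    have hcond : |x| ≤ 1 - δ := by rw [abs_of_pos hx0]; exact hx.2
    simp only [hs, augFun, augFun', if_pos hcond]
    rw [Real.sign_of_pos hx0, abs_of_pos hx0]
    rw [show I * (Real.exp (-k * x))^2 + (-k * (1 : ℝ) * Real.exp (-k * x))^2
        = (I + k^2) * (Real.exp (-k * x))^2 by ring]
    rw [Real.sqrt_mul (by positivity), Real.sqrt_sq (Real.exp_pos _).le]
  have E3 : ∀ x : ℝ, x ≠ 0 → x ∈ Ι (1-δ:ℝ) 1 →
      δ⁻¹ * Real.exp (-(1-δ)*k) * Real.sqrt (I*(1-x)^2+1) = s x := by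
    intro x _ hx
    rw [uIoc_of_le hd] at hx
    have hx0 : 0 < x := lt_of_le_of_lt (by linarith) hx.1
    have hcond : ¬ |x| ≤ 1 - δ := by rw [abs_of_pos hx0]; linarith [hx.1]
    simp only [hs, augFun, augFun', if_neg hcond]
    rw [Real.sign_of_pos hx0, abs_of_pos hx0]
    rw [show I * (δ⁻¹ * Real.exp (-(1-δ)*k) * (1 - x))^2
          + (-(1 : ℝ) * δ⁻¹ * Real.exp (-(1-δ)*k))^2
        = (δ⁻¹ * Real.exp (-(1-δ)*k))^2 * (I*(1-x)^2+1) by ring]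
    rw [Real.sqrt_mul (sq_nonneg _), Real.sqrt_sq hepos.le]
  have c4 : Continuous (fun x : ℝ => δ⁻¹ * Real.exp (-(1-δ)*k) * Real.sqrt (I*(1+x)^2+1)) := by
    fun_prop
  have c1 : Continuous (fun x : ℝ => Real.sqrt (I + k^2) * Real.exp (k*x)) := by fun_prop
  have c2 : Continuous (fun x : ℝ => Real.sqrt (I + k^2) * Real.exp (-k*x)) := by fun_prop
  have c3 : Continuous (fun x : ℝ => δ⁻¹ * Real.exp (-(1-δ)*k) * Real.sqrt (I*(1-x)^2+1)) := by
    fun_prop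
  have I4 := II_of_ae c4 E4
  have I1 := II_of_ae c1 E1
  have I2 := II_of_ae c2 E2
  have I3 := II_of_ae c3 E3
  rw [show (∫ t in (-1:ℝ)..1, Real.sqrt (I * (augFun δ k t)^2 + (augFun' δ k t)^2))
      = ∫ t in (-1:ℝ)..1, s t from rfl]
  rw [← intervalIntegral.integral_add_adjacent_intervals (b := (0:ℝ)) (I4.trans I1) (I2.trans I3),
      ← intervalIntegral.integral_add_adjacent_intervals (b := (-(1-δ):ℝ)) I4 I1,
      ← intervalIntegral.integral_add_adjacent_intervals (b := (1-δ:ℝ)) I2 I3]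
  rw [integral_congr_pt E4, integral_congr_pt E1, integral_congr_pt E2, integral_congr_pt E3]
  have i1 : ∫ t in (-(1-δ):ℝ)..0, Real.sqrt (I + k^2) * Real.exp (k*t)
      = Real.sqrt (I + k^2) * ((1 - Real.exp (-(1-δ)*k))/k) := by
    rw [intervalIntegral.integral_const_mul, exp_antideriv k _ _ hk.ne',
        show k * -(1-δ) = -(1-δ)*k by ring]
    simp
  have i2 : ∫ t in (0:ℝ)..(1-δ), Real.sqrt (I + k^2) * Real.exp (-k*t)
      = Real.sqrt (I + k^2) * ((1 - Real.exp (-(1-δ)*k))/k) := by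
    rw [intervalIntegral.integral_const_mul,
        show (fun t : ℝ => Real.exp (-k*t)) = (fun t : ℝ => Real.exp ((-k)*t)) from rfl,
        exp_antideriv (-k) _ _ (by linarith), show -k * (1-δ) = -(1-δ)*k by ring]
    rw [show -k * 0 = (0:ℝ) by ring, Real.exp_zero]
    rw [show (Real.exp (-(1-δ)*k) - 1) / -k = (1 - Real.exp (-(1-δ)*k))/k by
      rw [div_neg, ← neg_div, neg_sub] ]
  have i4 : ∫ t in (-1:ℝ)..(-(1-δ)), δ⁻¹ * Real.exp (-(1-δ)*k) * Real.sqrt (I*(1+t)^2+1)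
      = δ⁻¹ * Real.exp (-(1-δ)*k) * ∫ t in (-1:ℝ)..(-(1-δ)), Real.sqrt (I*(1+t)^2+1) :=
    intervalIntegral.integral_const_mul _ _
  have i3 : ∫ t in (1-δ:ℝ)..1, δ⁻¹ * Real.exp (-(1-δ)*k) * Real.sqrt (I*(1-t)^2+1)
      = δ⁻¹ * Real.exp (-(1-δ)*k) * ∫ t in (1-δ:ℝ)..1, Real.sqrt (I*(1-t)^2+1) :=
    intervalIntegral.integral_const_mul _ _
  rw [i1, i2, i3, i4]
  ring

lemma edge_R (I δ : ℝ) (hI : 0 ≤ I) (hδ : 0 < δ) (hδ1 : δ < 1) :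
    δ ≤ (∫ t in (1-δ:ℝ)..1, Real.sqrt (I*(1-t)^2+1)) ∧
      (∫ t in (1-δ:ℝ)..1, Real.sqrt (I*(1-t)^2+1)) ≤ δ * Real.sqrt (I*δ^2+1) := by
  have hd : (1-δ:ℝ) ≤ 1 := by linarith
  have hco : Continuous (fun t : ℝ => Real.sqrt (I*(1-t)^2+1)) := by fun_prop
  constructor
  · have h := intervalIntegral.integral_mono_on (f := fun _ : ℝ => (1:ℝ))
      (g := fun t : ℝ => Real.sqrt (I*(1-t)^2+1)) hd intervalIntegrable_const (μ := volume)
      (hco.intervalIntegrable _ _) (fun x hx => by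
        calc (1:ℝ) = Real.sqrt 1 := Real.sqrt_one.symm
        _ ≤ _ := Real.sqrt_le_sqrt (by nlinarith [sq_nonneg (1-x), hI]))
    simpa using h
  · have h := intervalIntegral.integral_mono_on (g := fun _ : ℝ => Real.sqrt (I*δ^2+1))
      (f := fun t : ℝ => Real.sqrt (I*(1-t)^2+1)) hd (hco.intervalIntegrable _ _)
      intervalIntegrable_const (μ := volume) (fun x hx => by
        refine Real.sqrt_le_sqrt ?_
        have h1 : 0 ≤ 1 - x := by linarith [hx.2]
        have h2 : 1 - x ≤ δ := by linarith [hx.1]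
        have h3 : (1-x)^2 ≤ δ^2 := by nlinarith
        nlinarith [mul_le_mul_of_nonneg_left h3 hI])
    simpa using h
  
lemma edge_L (I δ : ℝ) (hI : 0 ≤ I) (hδ : 0 < δ) (hδ1 : δ < 1) :
    δ ≤ (∫ t in (-1:ℝ)..(-(1-δ)), Real.sqrt (I*(1+t)^2+1)) ∧
      (∫ t in (-1:ℝ)..(-(1-δ)), Real.sqrt (I*(1+t)^2+1)) ≤ δ * Real.sqrt (I*δ^2+1) := by
  have hd : (-1:ℝ) ≤ -(1-δ) := by linarith
  have hco : Continuous (fun t : ℝ => Real.sqrt (I*(1+t)^2+1)) := by fun_prop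
  constructor
  · have h := intervalIntegral.integral_mono_on (f := fun _ : ℝ => (1:ℝ))
      (g := fun t : ℝ => Real.sqrt (I*(1+t)^2+1)) hd intervalIntegrable_const (μ := volume)
      (hco.intervalIntegrable _ _) (fun x hx => by
        calc (1:ℝ) = Real.sqrt 1 := Real.sqrt_one.symm
        _ ≤ _ := Real.sqrt_le_sqrt (by nlinarith [sq_nonneg (1+x), hI]))
    rw [show (-(1-δ):ℝ) = δ - 1 by ring]
    simpa using h
  · have h := intervalIntegral.integral_mono_on (g := fun _ : ℝ => Real.sqrt (I*δ^2+1))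
      (f := fun t : ℝ => Real.sqrt (I*(1+t)^2+1)) hd (hco.intervalIntegrable _ _)
      intervalIntegrable_const (μ := volume) (fun x hx => by
        refine Real.sqrt_le_sqrt ?_
        have h1 : 0 ≤ 1 + x := by linarith [hx.1]
        have h2 : 1 + x ≤ δ := by linarith [hx.2]
        have h3 : (1+x)^2 ≤ δ^2 := by nlinarith
        nlinarith [mul_le_mul_of_nonneg_left h3 hI])
    rw [show (-(1-δ):ℝ) = δ - 1 by ring]
    simpa using h

lemma tendsto_within_of_cont {f : ℝ → ℝ} (hf : Continuous f) (a : ℝ) (s : Set ℝ) :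
    Tendsto f (nhdsWithin a s) (nhds (f a)) :=
  (hf.tendsto a).mono_left nhdsWithin_le_nhds


/-- Limit computation in the proof of the Augmented van Trees 1 bound (Example 2.3):
as `δ → 0⁺`,
`(∫_{-1}^1 α_{δ,k}) / (∫_{-1}^1 √(I α_{δ,k}² + (α_{δ,k}')²)) → 1/(√(I+k²) + k/(e^k - 1))`,
and the right-hand side tends to `1/(√I + 1)` as `k → 0⁺`. -/
theorem augmentation_limit (I k : ℝ) (hI : 0 ≤ I) (hk : 0 < k) :
    Tendsto
      (fun δ : ℝ =>
        (∫ t in (-1 : ℝ)..1, augFun δ k t) /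
          ∫ t in (-1 : ℝ)..1,
            Real.sqrt (I * (augFun δ k t) ^ 2 + (augFun' δ k t) ^ 2))
      (nhdsWithin 0 (Ioi 0))
      (nhds (1 / (Real.sqrt (I + k ^ 2) + k / (Real.exp k - 1))))
    ∧ Tendsto
        (fun k : ℝ => 1 / (Real.sqrt (I + k ^ 2) + k / (Real.exp k - 1)))
        (nhdsWithin 0 (Ioi 0))
        (nhds (1 / (Real.sqrt I + 1))) := by
  constructor
  · -- part 1
    have hev : ∀ᶠ δ in nhdsWithin (0:ℝ) (Ioi 0), δ ∈ Ioo (0:ℝ) 1 :=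
      Ioo_mem_nhdsGT_of_mem ⟨le_refl 0, one_pos⟩
    have hexpk : Real.exp (-k) < 1 := Real.exp_lt_one_iff.mpr (by linarith)
    -- numerator limit
    have hNc : Tendsto (fun δ : ℝ => 2*(1-Real.exp (-(1-δ)*k))/k + δ * Real.exp (-(1-δ)*k))
        (nhdsWithin 0 (Ioi 0)) (nhds (2*(1-Real.exp (-k))/k)) := by
      have hco : Continuous (fun δ : ℝ => 2*(1-Real.exp (-(1-δ)*k))/k + δ * Real.exp (-(1-δ)*k)) := by
        fun_prop
      have h := tendsto_within_of_cont hco 0 (Ioi 0)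
      convert h using 2
      norm_num
    have hN : Tendsto (fun δ : ℝ => ∫ t in (-1:ℝ)..1, augFun δ k t)
        (nhdsWithin 0 (Ioi 0)) (nhds (2*(1-Real.exp (-k))/k)) := by
      refine Tendsto.congr' ?_ hNc
      filter_upwards [hev] with δ hδ
      exact (numer_eq k δ hk hδ.1 hδ.2).symm
    -- denominator limit via squeeze
    set LD : ℝ := Real.sqrt (I + k^2) * (2*(1-Real.exp (-k))/k) + 2*Real.exp (-k) with hLD
    have hlow : Tendsto (fun δ : ℝ =>
        Real.sqrt (I + k^2) * (2*(1-Real.exp (-(1-δ)*k))/k) + 2*Real.exp (-(1-δ)*k))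
        (nhdsWithin 0 (Ioi 0)) (nhds LD) := by
      have hco : Continuous (fun δ : ℝ =>
          Real.sqrt (I + k^2) * (2*(1-Real.exp (-(1-δ)*k))/k) + 2*Real.exp (-(1-δ)*k)) := by
        fun_prop
      have h := tendsto_within_of_cont hco 0 (Ioi 0)
      convert h using 2
      rw [hLD]
      norm_num
    have hup : Tendsto (fun δ : ℝ =>
        Real.sqrt (I + k^2) * (2*(1-Real.exp (-(1-δ)*k))/k)
          + 2*Real.exp (-(1-δ)*k) * Real.sqrt (I*δ^2+1))
        (nhdsWithin 0 (Ioi 0)) (nhds LD) := by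
      have hco : Continuous (fun δ : ℝ =>
          Real.sqrt (I + k^2) * (2*(1-Real.exp (-(1-δ)*k))/k)
            + 2*Real.exp (-(1-δ)*k) * Real.sqrt (I*δ^2+1)) := by
        fun_prop
      have h := tendsto_within_of_cont hco 0 (Ioi 0)
      convert h using 2
      rw [hLD]
      norm_num [Real.sqrt_one]
    have hD : Tendsto (fun δ : ℝ => ∫ t in (-1:ℝ)..1,
        Real.sqrt (I * (augFun δ k t)^2 + (augFun' δ k t)^2))
        (nhdsWithin 0 (Ioi 0)) (nhds LD) := by
      refine tendsto_of_tendsto_of_tendsto_of_le_of_le' hlow hup ?_ ?_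
      · filter_upwards [hev] with δ hδ
        rw [denom_eq I k δ hI hk hδ.1 hδ.2]
        have hEL := (edge_L I δ hI hδ.1 hδ.2).1
        have hER := (edge_R I δ hI hδ.1 hδ.2).1
        have hepos : 0 < δ⁻¹ * Real.exp (-(1-δ)*k) := mul_pos (inv_pos.mpr hδ.1) (Real.exp_pos _)
        have key : 2*Real.exp (-(1-δ)*k) ≤ δ⁻¹ * Real.exp (-(1-δ)*k) *
            ((∫ t in (-1:ℝ)..(-(1-δ)), Real.sqrt (I*(1+t)^2+1))
              + ∫ t in (1-δ:ℝ)..1, Real.sqrt (I*(1-t)^2+1)) := by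
          have h2 : δ + δ ≤ _ := add_le_add hEL hER
          have := mul_le_mul_of_nonneg_left h2 hepos.le
          calc 2*Real.exp (-(1-δ)*k) = δ⁻¹ * Real.exp (-(1-δ)*k) * (δ + δ) := by
                field_simp [hδ.1.ne']; ring
          _ ≤ _ := this
        linarith
      · filter_upwards [hev] with δ hδ
        rw [denom_eq I k δ hI hk hδ.1 hδ.2]
        have hEL := (edge_L I δ hI hδ.1 hδ.2).2
        have hER := (edge_R I δ hI hδ.1 hδ.2).2
        have hepos : 0 < δ⁻¹ * Real.exp (-(1-δ)*k) := mul_pos (inv_pos.mpr hδ.1) (Real.exp_pos _)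
        have key : δ⁻¹ * Real.exp (-(1-δ)*k) *
            ((∫ t in (-1:ℝ)..(-(1-δ)), Real.sqrt (I*(1+t)^2+1))
              + ∫ t in (1-δ:ℝ)..1, Real.sqrt (I*(1-t)^2+1))
            ≤ 2*Real.exp (-(1-δ)*k) * Real.sqrt (I*δ^2+1) := by
          have h2 := add_le_add hEL hER
          have h3 := mul_le_mul_of_nonneg_left h2 hepos.le
          calc _ ≤ δ⁻¹ * Real.exp (-(1-δ)*k) * (δ * Real.sqrt (I*δ^2+1) + δ * Real.sqrt (I*δ^2+1)) := h3
          _ = 2*Real.exp (-(1-δ)*k) * Real.sqrt (I*δ^2+1) := by field_simp [hδ.1.ne']; ring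
        linarith
    -- combine
    have hLDpos : 0 < LD := by
      have h1 : 0 ≤ Real.sqrt (I + k^2) * (2*(1-Real.exp (-k))/k) := by
        apply mul_nonneg (Real.sqrt_nonneg _)
        apply div_nonneg (by nlinarith) hk.le
      have h2 : 0 < 2*Real.exp (-k) := by positivity
      rw [hLD]; linarith
    have hdiv := hN.div hD hLDpos.ne'
    have hval : 2*(1-Real.exp (-k))/k / LD
        = 1 / (Real.sqrt (I + k ^ 2) + k / (Real.exp k - 1)) := by
      have hek : (1:ℝ) < Real.exp k := by
        calc (1:ℝ) = Real.exp 0 := Real.exp_zero.symm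
        _ < Real.exp k := Real.exp_lt_exp.mpr hk
      have hC : 0 < Real.sqrt (I + k ^ 2) + k / (Real.exp k - 1) :=
        add_pos_of_nonneg_of_pos (Real.sqrt_nonneg _) (div_pos hk (by linarith))
      have hE1 : Real.exp k - 1 ≠ 0 := by linarith
      have hu : Real.exp (-k) = (Real.exp k)⁻¹ := Real.exp_neg k
      rw [hLD] at hLDpos ⊢
      rw [hu] at hLDpos ⊢
      rw [div_eq_div_iff hLDpos.ne' hC.ne']
      field_simp
    rw [← hval]
    exact hdiv
  · -- part 2
    have hsq : Tendsto (fun k : ℝ => Real.sqrt (I + k^2)) (nhdsWithin 0 (Ioi 0))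
        (nhds (Real.sqrt I)) := by
      have hco : Continuous (fun k : ℝ => Real.sqrt (I + k^2)) := by fun_prop
      have h := tendsto_within_of_cont hco 0 (Ioi 0)
      norm_num at h
      exact h
    have hslope : Tendsto (fun k : ℝ => (Real.exp k - 1)/k) (nhdsWithin 0 (Ioi 0)) (nhds 1) := by
      have h := hasDerivAt_iff_tendsto_slope.mp (Real.hasDerivAt_exp 0)
      have h2 : Tendsto (slope Real.exp 0) (nhdsWithin 0 (Ioi 0)) (nhds (Real.exp 0)) :=
        h.mono_left (nhdsWithin_mono 0 (fun x hx => ne_of_gt hx))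
      rw [Real.exp_zero] at h2
      refine h2.congr fun x => ?_
      simp [slope_def_field]
    have htail : Tendsto (fun k : ℝ => k/(Real.exp k - 1)) (nhdsWithin 0 (Ioi 0)) (nhds 1) := by
      have h := hslope.inv₀ one_ne_zero
      simpa [inv_div] using h
    have hne : Real.sqrt I + 1 ≠ 0 := by positivity
    have h := (hsq.add htail).inv₀ hne
    simpa [one_div] using h
end

section
/- For a ∈ (0, 1/2), sup over λ ∈ (0,1] and m > 0 of m² λ^a / ((m+1)² (m² + λ)) equals a^{2a}(1−a)^{2−2a} · a^a (1−a)^{1−a} / 1, i.e. the function Ā(a) := (1/(a^a(1−a)^{1−a})) · sup_{0<λ≤1, m>0} m²λ^a/((m+1)²(m²+λ)) satisfies Ā(a) = a^{2a}(1−a)^{2(1−a)}, with the supremum attained at λ = a³/(1−a)³ and m = a/(1−a). -/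
open Real

/-- Optimization from the proof of Theorem 3.2: for `a ∈ (0,1/2)`, the supremum over
`λ ∈ (0,1]`, `m > 0` of `m² λ^a / ((m+1)²(m²+λ))` is attained at `λ = a³/(1-a)³`,
`m = a/(1-a)`, and dividing the attained value by `a^a (1-a)^(1-a)` gives
`Ā(a) = a^(2a) (1-a)^(2(1-a))`. -/
theorem optimization_lower_bound_constant (a : ℝ) (ha : 0 < a) (ha2 : a < 1 / 2) :
    IsGreatest
        {v : ℝ | ∃ l m : ℝ, 0 < l ∧ l ≤ 1 ∧ 0 < m ∧
          v = m ^ 2 * l ^ a / ((m + 1) ^ 2 * (m ^ 2 + l))}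
        ((a / (1 - a)) ^ 2 * (a ^ 3 / (1 - a) ^ 3) ^ a /
          ((a / (1 - a) + 1) ^ 2 * ((a / (1 - a)) ^ 2 + a ^ 3 / (1 - a) ^ 3)))
    ∧ (1 / (a ^ a * (1 - a) ^ (1 - a))) *
        ((a / (1 - a)) ^ 2 * (a ^ 3 / (1 - a) ^ 3) ^ a /
          ((a / (1 - a) + 1) ^ 2 * ((a / (1 - a)) ^ 2 + a ^ 3 / (1 - a) ^ 3)))
      = a ^ (2 * a) * (1 - a) ^ (2 * (1 - a)) := by
  have h1a : (0:ℝ) < 1 - a := by linarith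
  set c : ℝ := a ^ a * (1 - a) ^ (1 - a) with hc
  have hca : (0:ℝ) < a ^ (a:ℝ) := rpow_pos_of_pos ha a
  have hcb : (0:ℝ) < (1 - a) ^ ((1 - a):ℝ) := rpow_pos_of_pos h1a _
  have hcpos : 0 < c := mul_pos hca hcb
  -- the attained value equals c ^ 3
  have hX : (a ^ 3 / (1 - a) ^ 3 : ℝ) ^ a = a ^ (3 * a) / (1 - a) ^ (3 * a) := by
    rw [div_rpow (by positivity) (by positivity), ← rpow_natCast a 3, ← rpow_natCast (1 - a) 3,
      ← rpow_mul ha.le, ← rpow_mul h1a.le]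
    norm_num
  have hY : (1 - a) ^ ((3:ℝ) - 3 * a) = (1 - a) ^ 3 / (1 - a) ^ (3 * a) := by
    rw [rpow_sub h1a, ← rpow_natCast (1 - a) 3]
    norm_num
  have hc3 : c ^ 3 = a ^ (3 * a) * ((1 - a) ^ 3 / (1 - a) ^ (3 * a)) := by
    rw [← hY, hc, mul_pow, ← rpow_natCast (a ^ (a:ℝ)) 3, ← rpow_natCast ((1 - a) ^ ((1 - a):ℝ)) 3,
      ← rpow_mul ha.le, ← rpow_mul h1a.le]
    norm_num
    ring_nf
  have hval : (a / (1 - a)) ^ 2 * (a ^ 3 / (1 - a) ^ 3) ^ a /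
      ((a / (1 - a) + 1) ^ 2 * ((a / (1 - a)) ^ 2 + a ^ 3 / (1 - a) ^ 3)) = c ^ 3 := by
    rw [hX, hc3]
    have h1 : (1 - a) ≠ 0 := ne_of_gt h1a
    have h2 : (1 - a) ^ (3 * a) ≠ 0 := ne_of_gt (rpow_pos_of_pos h1a _)
    have h3 : a ≠ 0 := ne_of_gt ha
    field_simp
    ring
  constructor
  · constructor
    · -- membership
      refine ⟨a ^ 3 / (1 - a) ^ 3, a / (1 - a), by positivity, ?_, by positivity, rfl⟩
      rw [div_le_one (by positivity)]
      have : a ≤ 1 - a := by linarith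
      exact pow_le_pow_left₀ ha.le this 3
    · -- upper bound
      rintro v ⟨l, m, hl, hl1, hm, rfl⟩
      rw [hval, div_le_iff₀ (by positivity)]
      have h1 : m ^ (a:ℝ) ≤ c * (m + 1) := by
        have := Real.geom_mean_le_arith_mean2_weighted (le_of_lt ha) (le_of_lt h1a)
          (p₁ := m / a) (p₂ := 1 / (1 - a)) (by positivity) (by positivity) (by ring)
        have hs : a * (m / a) + (1 - a) * (1 / (1 - a)) = m + 1 := by
          field_simp
        rw [hs, div_rpow hm.le ha.le, div_rpow zero_le_one h1a.le, one_rpow] at this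
        rw [div_mul_div_comm, mul_one, div_le_iff₀ (by positivity)] at this
        calc m ^ (a:ℝ) ≤ (m + 1) * (a ^ (a:ℝ) * (1 - a) ^ ((1 - a):ℝ)) := this
          _ = c * (m + 1) := by rw [hc]; ring
      have h2 : m ^ ((2:ℝ) - 2 * a) * l ^ (a:ℝ) ≤ c * (m ^ 2 + l) := by
        have := Real.geom_mean_le_arith_mean2_weighted (le_of_lt h1a) (le_of_lt ha)
          (p₁ := m ^ 2 / (1 - a)) (p₂ := l / a) (by positivity) (by positivity) (by ring)
        have hs : (1 - a) * (m ^ 2 / (1 - a)) + a * (l / a) = m ^ 2 + l := by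
          field_simp
        rw [hs, div_rpow (by positivity) h1a.le, div_rpow hl.le ha.le] at this
        have hm2 : (m ^ 2 : ℝ) ^ ((1 - a):ℝ) = m ^ ((2:ℝ) - 2 * a) := by
          rw [← rpow_natCast m 2, ← rpow_mul hm.le]
          norm_num
          ring_nf
        rw [hm2, div_mul_div_comm, div_le_iff₀ (by positivity)] at this
        calc m ^ ((2:ℝ) - 2 * a) * l ^ (a:ℝ)
            ≤ (m ^ 2 + l) * ((1 - a) ^ ((1 - a):ℝ) * a ^ (a:ℝ)) := this
          _ = c * (m ^ 2 + l) := by rw [hc]; ring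
      have key : m ^ 2 * l ^ a = (m ^ (a:ℝ)) ^ 2 * (m ^ ((2:ℝ) - 2 * a) * l ^ (a:ℝ)) := by
        rw [← rpow_natCast (m ^ (a:ℝ)) 2, ← rpow_mul hm.le, ← mul_assoc, ← rpow_add hm,
          show a * ((2:ℕ):ℝ) + (2 - 2 * a) = ((2:ℕ):ℝ) by push_cast; ring, rpow_natCast]
      calc m ^ 2 * l ^ a = (m ^ (a:ℝ)) ^ 2 * (m ^ ((2:ℝ) - 2 * a) * l ^ (a:ℝ)) := key
        _ ≤ (c * (m + 1)) ^ 2 * (c * (m ^ 2 + l)) := by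
            apply mul_le_mul (pow_le_pow_left₀ (rpow_nonneg hm.le a) h1 2) h2 (by positivity)
              (by positivity)
        _ = c ^ 3 * ((m + 1) ^ 2 * (m ^ 2 + l)) := by ring
  · rw [hval]
    have : (1 / c) * c ^ 3 = c ^ 2 := by field_simp
    rw [this, hc, mul_pow, ← rpow_natCast (a ^ (a:ℝ)) 2, ← rpow_natCast ((1 - a) ^ ((1 - a):ℝ)) 2,
      ← rpow_mul ha.le, ← rpow_mul h1a.le]
    norm_num
    ring_nf
end
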